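/- Given positive integers n, m, t with m = t+1, there exists a (t+1)-color connected colored edge graph G(V,E,C,f) with |V| = n and |C| = m if and only if n ≥ 2m. -/

import Mathlib

open SimpleGraph

private lemma conn_card_le {V : Type*} [Fintype V] [DecidableEq V] {G : SimpleGraph V}
    [Fintype G.edgeSet] (h : G.Connected) :
    Fintype.card V ≤ G.edgeFinset.card + 1 := by
  classical
  obtain ⟨root⟩ := h.nonempty
  have hwalk : ∀ w : V, ∃ p : G.Walk w root, p.length = G.dist w root :=
    fun w => (h w root).exists_walk_length_eq_dist
  choose p hp using hwalk
  have hnn : ∀ w : V, w ≠ root → ¬ (p w).Nil := by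
    intro w hw hnil
    have h0 : (p w).length = 0 := Walk.nil_iff_length_eq.mp hnil
    rw [hp w] at h0
    exact hw ((h.dist_eq_zero_iff).mp h0)
  have hcard : (({root}ᶜ : Finset V)).card ≤ G.edgeFinset.card := by
    apply Finset.card_le_card_of_injOn (fun w => s(w, (p w).getVert 1))
    · intro w hw
      simp only [Finset.mem_coe, Finset.mem_compl, Finset.mem_singleton] at hw
      simp only [Finset.mem_coe, mem_edgeFinset, mem_edgeSet]
      exact (p w).adj_snd (hnn w hw)
    · intro a ha b hb heq
      simp only [Finset.mem_coe, Finset.mem_compl, Finset.mem_singleton] at ha hb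
      by_contra hab
      rw [Sym2.eq_iff] at heq
      rcases heq with ⟨h1, _⟩ | ⟨h1, h2⟩
      · exact hab h1
      have da : G.dist a root = (p a).tail.length + 1 := by
        rw [Walk.length_tail_add_one (hnn a ha), hp a]
      have db : G.dist b root = (p b).tail.length + 1 := by
        rw [Walk.length_tail_add_one (hnn b hb), hp b]
      have ta : G.dist ((p a).getVert 1) root ≤ (p a).tail.length := dist_le _
      have tb : G.dist ((p b).getVert 1) root ≤ (p b).tail.length := dist_le _
      have ea : G.dist ((p a).getVert 1) root = G.dist b root := by rw [h2]
      have eb : G.dist ((p b).getVert 1) root = G.dist a root := by rw [← h1]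
      omega
  have hc2 : (({root}ᶜ : Finset V)).card = Fintype.card V - 1 := by
    rw [Finset.card_compl, Finset.card_singleton]
  have hpos : 0 < Fintype.card V := Fintype.card_pos_iff.mpr ⟨root⟩
  omega

private def col (m a b : ℕ) : ℕ :=
  if a ≤ b
  then (if b < 2*m then (if (a+b) % 2 = 0 then a/2 else b/2) else if a < 2*m then a/2 else 0)
  else (if a < 2*m then (if (a+b) % 2 = 0 then b/2 else a/2) else if b < 2*m then b/2 else 0)

private lemma col_lt (m a b : ℕ) (hm : 0 < m) : col m a b < m := by
  unfold col; split_ifs <;> omega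

private lemma col_symm (m a b : ℕ) : col m a b = col m b a := by
  unfold col; split_ifs <;> omega

private lemma col_pair (m c : ℕ) (hc : c < m) : col m (2*c) (2*c+1) = c := by
  unfold col; split_ifs <;> omega

private lemma col_key (m c x : ℕ) (hc : c < m) :
    col m x (2*c) = c ∨ (col m x (2*c+1) = c ∧ x ≠ 2*c+1) := by
  unfold col; split_ifs <;> omega

/-- For positive integers `n, m, t` with `m = t + 1`, there exists a
`(t+1)`-color connected colored edge graph with `n` vertices and `m` colors iff
`n ≥ 2m`. -/
theorem stmt_2 (n m t : ℕ) (hn : 0 < n) (ht : 0 < t) (hmt : m = t + 1) :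
    (∃ (G : SimpleGraph (Fin n)) (f : Sym2 (Fin n) → Fin m),
        (∀ c : Fin m, ∃ e ∈ G.edgeSet, f e = c) ∧
        ∀ Ct : Finset (Fin m), Ct.card = t →
          ∀ A B : Fin n, (G.deleteEdges (f ⁻¹' ↑Ct)).Reachable A B) ↔
      n ≥ 2 * m := by
  classical
  have hm : 0 < m := by omega
  constructor
  · rintro ⟨G, f, hsurj, hconn⟩
    -- first, n ≥ 2
    have hn2 : 2 ≤ n := by
      obtain ⟨e, he, -⟩ := hsurj ⟨0, hm⟩
      revert he
      refine Sym2.ind (fun u v he => ?_) e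
      rw [SimpleGraph.mem_edgeSet] at he
      have hne := he.ne
      have hu := u.2
      have hv := v.2
      by_contra hlt
      exact hne (Fin.ext (by omega))
    -- the one-color subgraphs
    set H : Fin m → SimpleGraph (Fin n) :=
      fun c => G.deleteEdges (f ⁻¹' ↑(Finset.univ \ {c} : Finset (Fin m))) with hH
    have hCt : ∀ c : Fin m, (Finset.univ \ {c} : Finset (Fin m)).card = t := by
      intro c
      rw [Finset.card_sdiff_of_subset (Finset.subset_univ _), Finset.card_singleton,
        Finset.card_univ, Fintype.card_fin]
      omega
    have hHconn : ∀ c : Fin m, (H c).Connected := by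
      intro c
      rw [SimpleGraph.connected_iff]
      exact ⟨fun u v => hconn _ (hCt c) u v, ⟨⟨0, hn⟩⟩⟩
    have hHcard : ∀ c : Fin m, n - 1 ≤ (H c).edgeFinset.card := by
      intro c
      have := conn_card_le (hHconn c)
      rw [Fintype.card_fin] at this
      omega
    have hHmem : ∀ (c : Fin m) (e : Sym2 (Fin n)),
        e ∈ (H c).edgeFinset → e ∈ G.edgeFinset ∧ f e = c := by
      intro c e he
      rw [mem_edgeFinset, hH] at he
      rw [SimpleGraph.edgeSet_deleteEdges] at he
      obtain ⟨h1, h2⟩ := he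
      simp only [Set.mem_preimage, Finset.coe_sdiff, Finset.coe_univ, Set.mem_diff,
        Set.mem_univ, true_and, Finset.coe_singleton, Set.mem_singleton_iff, not_not] at h2
      exact ⟨mem_edgeFinset.mpr h1, h2⟩
    -- disjointness and counting
    have hdisj : ∀ c ∈ (Finset.univ : Finset (Fin m)), ∀ d ∈ (Finset.univ : Finset (Fin m)),
        c ≠ d → Disjoint ((H c).edgeFinset) ((H d).edgeFinset) := by
      intro c _ d _ hcd
      rw [Finset.disjoint_left]
      intro e hec hed
      exact hcd (((hHmem c e hec).2.symm.trans (hHmem d e hed).2))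
    have hsum : ∑ c : Fin m, ((H c).edgeFinset).card ≤ G.edgeFinset.card := by
      rw [← Finset.card_biUnion hdisj]
      apply Finset.card_le_card
      intro e he
      rw [Finset.mem_biUnion] at he
      obtain ⟨c, _, hec⟩ := he
      exact (hHmem c e hec).1
    have hchoose : G.edgeFinset.card ≤ n.choose 2 := by
      have := SimpleGraph.card_edgeFinset_le_card_choose_two (G := G)
      rwa [Fintype.card_fin] at this
    have hlow : m * (n - 1) ≤ ∑ c : Fin m, ((H c).edgeFinset).card := by
      calc m * (n - 1) = ∑ _c : Fin m, (n - 1) := by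
            rw [Finset.sum_const, Finset.card_univ, Fintype.card_fin, smul_eq_mul]
        _ ≤ ∑ c : Fin m, ((H c).edgeFinset).card := Finset.sum_le_sum fun c _ => hHcard c
    have hch2 : n.choose 2 = n * (n - 1) / 2 := Nat.choose_two_right n
    have hkey : m * (n - 1) ≤ n * (n - 1) / 2 := by omega
    have hkey2 : 2 * (m * (n - 1)) ≤ n * (n - 1) := by omega
    have hfin : (2 * m) * (n - 1) ≤ n * (n - 1) := by linarith [hkey2]
    exact Nat.le_of_mul_le_mul_right hfin (by omega)
  · intro h2m
    -- construction
    refine ⟨⊤, Sym2.lift ⟨fun a b => ⟨col m a.val b.val, col_lt m a.val b.val hm⟩,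
      fun a b => Fin.ext (col_symm m a.val b.val)⟩, ?_, ?_⟩
    · intro c
      have hc := c.2
      refine ⟨s(⟨2*c.val, by omega⟩, ⟨2*c.val+1, by omega⟩), ?_, ?_⟩
      · rw [SimpleGraph.mem_edgeSet, SimpleGraph.top_adj]
        intro hcontra
        have := congrArg Fin.val hcontra
        simp at this
      · apply Fin.ext
        simpa using col_pair m c.val hc
    · intro Ct hCtcard A B
      -- the complement of Ct is a single color c
      have hcompl : (Ctᶜ : Finset (Fin m)).card = 1 := by
        rw [Finset.card_compl, Fintype.card_fin, hCtcard]
        omega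
      obtain ⟨c, hc⟩ := Finset.card_eq_one.mp hcompl
      have hcm := c.2
      have hnotmem : ∀ d : Fin m, d ∉ Ct ↔ d = c := by
        intro d
        rw [← Finset.mem_compl, hc, Finset.mem_singleton]
      set G' := (⊤ : SimpleGraph (Fin n)).deleteEdges
        ((Sym2.lift ⟨fun a b => ⟨col m a.val b.val, col_lt m a.val b.val hm⟩,
          fun a b => Fin.ext (col_symm m a.val b.val)⟩) ⁻¹' ↑Ct) with hG'
      have hadj : ∀ x y : Fin n, x.val ≠ y.val → col m x.val y.val = c.val → G'.Adj x y := by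
        intro x y hxy hcol
        rw [hG', SimpleGraph.deleteEdges_adj, SimpleGraph.top_adj]
        refine ⟨fun hc' => hxy (congrArg Fin.val hc'), ?_⟩
        rw [Set.mem_preimage]
        intro hmem
        rw [Finset.mem_coe] at hmem
        have : (⟨col m x.val y.val, col_lt m x.val y.val hm⟩ : Fin m) ∈ Ct := hmem
        have hceq : (⟨col m x.val y.val, col_lt m x.val y.val hm⟩ : Fin m) = c :=
          Fin.ext hcol
        rw [hceq] at this
        have hcc : c ∈ Ctᶜ := by rw [hc]; exact Finset.mem_singleton_self c
        exact (Finset.mem_compl.mp hcc) this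
      set P : Fin n := ⟨2*c.val, by omega⟩ with hP
      set Q : Fin n := ⟨2*c.val+1, by omega⟩ with hQ
      have hPQ : G'.Adj P Q := hadj P Q (by simp [hP, hQ]) (by simpa using col_pair m c.val hcm)
      have hreach : ∀ v : Fin n, G'.Reachable v P := by
        intro v
        by_cases hvP : v = P
        · exact hvP ▸ Reachable.refl v
        have hvval : v.val ≠ 2*c.val := fun h => hvP (Fin.ext (by simpa [hP] using h))
        rcases col_key m c.val v.val hcm with hk | ⟨hk, hk2⟩
        · exact (hadj v P hvval (by simpa [hP] using hk)).reachable
        · exact ((hadj v Q (by simpa [hQ] using hk2) (by simpa [hQ] using hk)).reachable).trans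
            hPQ.symm.reachable
      exact (hreach A).trans (hreach B).symm
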